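/- For 1 < α < 2, the function f : ℝ^d → ℝ^d defined by f(x) = ‖x‖^{α-2}·x (with f(0)=0) is (α-1)-Hölder continuous with constant 5: ‖f(x)-f(y)‖ ≤ 5·‖x-y‖^{α-1} for all x, y. -/

import Mathlib

private lemma rpow_mul_self (α : ℝ) (hα1 : 1 < α) {s : ℝ} (hs : 0 ≤ s) :
    s ^ (α - 2) * s = s ^ (α - 1) := by
  rw [show α - 1 = (α - 2) + 1 by ring, Real.rpow_add_one' hs (by linarith)]

private lemma aux_ineq (α : ℝ) (hα1 : 1 < α) (hα2 : α < 2) {s r t : ℝ}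
    (hs : 0 < s) (hsr : s ≤ r) (hrt : r ≤ s + t) :
    s ^ (α - 2) * s ≤ r ^ (α - 2) * (s + t) := by
  have ht : 0 ≤ t := by linarith
  have hst : (0:ℝ) < s + t := by linarith
  have h1 : s ^ (α - 2) * s = s ^ (α - 1) := rpow_mul_self α hα1 hs.le
  have h2 : s ^ (α - 1) ≤ (s + t) ^ (α - 1) :=
    Real.rpow_le_rpow hs.le (by linarith) (by linarith)
  have h3 : (s + t) ^ (α - 1) = (s + t) ^ (α - 2) * (s + t) :=
    (rpow_mul_self α hα1 hst.le).symm
  have h4 : (s + t) ^ (α - 2) ≤ r ^ (α - 2) :=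
    Real.rpow_le_rpow_of_nonpos (by linarith) hrt (by linarith)
  calc s ^ (α - 2) * s = s ^ (α - 1) := h1
    _ ≤ (s + t) ^ (α - 1) := h2
    _ = (s + t) ^ (α - 2) * (s + t) := h3
    _ ≤ r ^ (α - 2) * (s + t) := by
        have := mul_le_mul_of_nonneg_right h4 hst.le
        linarith

private lemma holder_core {d : ℕ} (α : ℝ) (hα1 : 1 < α) (hα2 : α < 2)
    (x y : EuclideanSpace ℝ (Fin d)) (hsr : ‖y‖ ≤ ‖x‖) :
    ‖(‖x‖ ^ (α - 2)) • x - (‖y‖ ^ (α - 2)) • y‖ ≤ 5 * ‖x - y‖ ^ (α - 1) := by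
  set r := ‖x‖ with hr
  set s := ‖y‖ with hsdef
  set t := ‖x - y‖ with htdef
  have hr0 : 0 ≤ r := norm_nonneg _
  have hs0 : 0 ≤ s := norm_nonneg _
  have ht0 : 0 ≤ t := norm_nonneg _
  have hrst : r ≤ s + t := by
    have := norm_sub_norm_le x y
    simpa [← hr, ← hsdef, ← htdef] using norm_le_insert' x y
  have htpow0 : 0 ≤ t ^ (α - 1) := Real.rpow_nonneg ht0 _
  rcases le_or_gt s t with hcase | hcase
  · -- s ≤ t : use triangle inequality directly
    have hbound : ‖(r ^ (α - 2)) • x - (s ^ (α - 2)) • y‖ ≤ r ^ (α - 2) * r + s ^ (α - 2) * s := by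
      calc ‖(r ^ (α - 2)) • x - (s ^ (α - 2)) • y‖
          ≤ ‖(r ^ (α - 2)) • x‖ + ‖(s ^ (α - 2)) • y‖ := norm_sub_le _ _
        _ = r ^ (α - 2) * r + s ^ (α - 2) * s := by
            rw [norm_smul, norm_smul, Real.norm_rpow_of_nonneg hr0, Real.norm_rpow_of_nonneg hs0,
              Real.norm_eq_abs, Real.norm_eq_abs, abs_of_nonneg hr0, abs_of_nonneg hs0,
              ← hr, ← hsdef]
    have h1 : s ^ (α - 2) * s ≤ t ^ (α - 1) := by
      rw [rpow_mul_self α hα1 hs0]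
      exact Real.rpow_le_rpow hs0 hcase (by linarith)
    have h2 : r ^ (α - 2) * r ≤ 2 * t ^ (α - 1) := by
      rw [rpow_mul_self α hα1 hr0]
      have hr2t : r ≤ 2 * t := by linarith
      calc r ^ (α - 1) ≤ (2 * t) ^ (α - 1) := Real.rpow_le_rpow hr0 hr2t (by linarith)
        _ = 2 ^ (α - 1) * t ^ (α - 1) := Real.mul_rpow (by norm_num) ht0
        _ ≤ 2 * t ^ (α - 1) := by
            have h21 : (2:ℝ) ^ (α - 1) ≤ 2 ^ (1:ℝ) :=
              Real.rpow_le_rpow_of_exponent_le one_le_two (by linarith)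
            rw [Real.rpow_one] at h21
            exact mul_le_mul_of_nonneg_right h21 htpow0
    linarith
  · -- t < s : split into two pieces
    have hs' : 0 < s := lt_of_le_of_lt ht0 hcase
    have hr' : 0 < r := lt_of_lt_of_le hs' hsr
    rcases eq_or_lt_of_le ht0 with ht00 | htpos
    · -- t = 0 means x = y
      have hxy : x = y := by
        have : ‖x - y‖ = 0 := ht00.symm
        rwa [norm_sub_eq_zero_iff] at this
      subst hxy
      simp [hr, hsdef, htpow0]
    set a := r ^ (α - 2) with ha
    set b := s ^ (α - 2) with hb
    have ha0 : 0 ≤ a := Real.rpow_nonneg hr0 _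
    have hab : a ≤ b := Real.rpow_le_rpow_of_nonpos hs' hsr (by linarith)
    have hsplit : a • x - b • y = a • (x - y) + (a - b) • y := by
      rw [smul_sub, sub_smul]; abel
    have hnorm : ‖a • x - b • y‖ ≤ a * t + (b - a) * s := by
      rw [hsplit]
      calc ‖a • (x - y) + (a - b) • y‖ ≤ ‖a • (x - y)‖ + ‖(a - b) • y‖ := norm_add_le _ _
        _ = |a| * t + |a - b| * s := by rw [norm_smul, norm_smul, Real.norm_eq_abs,
            Real.norm_eq_abs, ← htdef, ← hsdef]
        _ = a * t + (b - a) * s := by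
            rw [abs_of_nonneg ha0, abs_sub_comm, abs_of_nonneg (by linarith)]
    have hat : a * t ≤ t ^ (α - 1) := by
      have h1 : a ≤ t ^ (α - 2) :=
        Real.rpow_le_rpow_of_nonpos htpos (le_trans hcase.le hsr) (by linarith)
      calc a * t ≤ t ^ (α - 2) * t := mul_le_mul_of_nonneg_right h1 ht0
        _ = t ^ (α - 1) := rpow_mul_self α hα1 ht0
    have hba : (b - a) * s ≤ t ^ (α - 1) := by
      have haux : b * s ≤ a * (s + t) := aux_ineq α hα1 hα2 hs' hsr hrst
      have h2 : (b - a) * s ≤ a * t := by nlinarith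
      linarith
    linarith

theorem holder_norm_rpow_smul {d : ℕ} (α : ℝ) (hα1 : 1 < α) (hα2 : α < 2) :
    ∀ x y : EuclideanSpace ℝ (Fin d),
      ‖(‖x‖ ^ (α - 2)) • x - (‖y‖ ^ (α - 2)) • y‖ ≤ 5 * ‖x - y‖ ^ (α - 1) := by
  intro x y
  rcases le_total ‖y‖ ‖x‖ with h | h
  · exact holder_core α hα1 hα2 x y h
  · have := holder_core α hα1 hα2 y x h
    rwa [norm_sub_rev, norm_sub_rev y x] at this
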